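/- For x ∈ (0,1) ⊆ ℝ define K(x) := ∫₀^{π/2} (1 − x²·sin²θ)^{−1/2} dθ (Legendre's complete elliptic integral of the first kind). Then K is twice differentiable on (0,1) and satisfies the first Chudnovsky equation there: x(x−1)(x+1)·K''(x) + (3x²−1)·K'(x) + x·K(x) = 0 for all x ∈ (0,1). -/

import Mathlib

open Real

/-- Legendre's complete elliptic integral of the first kind. -/
noncomputable def ellipticK (x : ℝ) : ℝ :=
  ∫ θ in (0:ℝ)..(π / 2), (1 - x ^ 2 * Real.sin θ ^ 2) ^ (-(1 / 2 : ℝ))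

namespace ChudAux

open MeasureTheory intervalIntegral Metric Filter

noncomputable def eB (x θ : ℝ) : ℝ := 1 - x ^ 2 * Real.sin θ ^ 2
noncomputable def eU (x θ : ℝ) : ℝ := eB x θ ^ (-(1 / 2 : ℝ))
noncomputable def eU1 (x θ : ℝ) : ℝ := x * Real.sin θ ^ 2 * eB x θ ^ (-(3 / 2 : ℝ))
noncomputable def eU2 (x θ : ℝ) : ℝ :=
  Real.sin θ ^ 2 * eB x θ ^ (-(3 / 2 : ℝ))
    + 3 * x ^ 2 * Real.sin θ ^ 4 * eB x θ ^ (-(5 / 2 : ℝ))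

lemma eB_pos {x : ℝ} (hx : x ^ 2 < 1) (θ : ℝ) : 0 < eB x θ := by
  have h1 : Real.sin θ ^ 2 ≤ 1 := sin_sq_le_one θ
  have h2 : (0:ℝ) ≤ x ^ 2 := sq_nonneg x
  have h3 : (0:ℝ) ≤ Real.sin θ ^ 2 := sq_nonneg _
  unfold eB; nlinarith

lemma eB_ne {x : ℝ} (hx : x ^ 2 < 1) (θ : ℝ) : eB x θ ≠ 0 := (eB_pos hx θ).ne'

lemma continuous_eB (x : ℝ) : Continuous (fun θ => eB x θ) := by
  unfold eB; fun_prop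

lemma continuous_eB_rpow {x : ℝ} (hx : x ^ 2 < 1) (p : ℝ) :
    Continuous (fun θ => eB x θ ^ p) :=
  (continuous_eB x).rpow_const (fun θ => Or.inl (eB_ne hx θ))

lemma continuous_eU {x : ℝ} (hx : x ^ 2 < 1) : Continuous (fun θ => eU x θ) :=
  continuous_eB_rpow hx _

lemma continuous_eU1 {x : ℝ} (hx : x ^ 2 < 1) : Continuous (fun θ => eU1 x θ) := by
  unfold eU1
  exact (continuous_const.mul (by fun_prop)).mul (continuous_eB_rpow hx _)

lemma continuous_eU2 {x : ℝ} (hx : x ^ 2 < 1) : Continuous (fun θ => eU2 x θ) := by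
  unfold eU2
  exact ((by fun_prop : Continuous fun θ : ℝ => Real.sin θ ^ 2).mul
      (continuous_eB_rpow hx _)).add
    ((continuous_const.mul (by fun_prop)).mul (continuous_eB_rpow hx _))

lemma hasDerivAt_eB (x θ : ℝ) :
    HasDerivAt (fun y => eB y θ) (-(2 * x * Real.sin θ ^ 2)) x := by
  have h : HasDerivAt (fun y : ℝ => y ^ 2 * Real.sin θ ^ 2)
      ((2 * x) * Real.sin θ ^ 2) x := by
    simpa using (hasDerivAt_pow 2 x).mul_const (Real.sin θ ^ 2)
  have := h.const_sub 1
  simpa [eB, mul_assoc] using this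

lemma hasDerivAt_eU {x : ℝ} (hx : x ^ 2 < 1) (θ : ℝ) :
    HasDerivAt (fun y => eU y θ) (eU1 x θ) x := by
  have h := (hasDerivAt_eB x θ).rpow_const (p := -(1/2:ℝ)) (Or.inl (eB_ne hx θ))
  have he : (-(1/2:ℝ)) - 1 = -(3/2:ℝ) := by norm_num
  rw [he] at h
  have : (-(2 * x * Real.sin θ ^ 2)) * (-(1/2:ℝ)) * eB x θ ^ (-(3/2:ℝ))
      = eU1 x θ := by unfold eU1; ring
  rw [this] at h
  exact h

lemma hasDerivAt_eU1 {x : ℝ} (hx : x ^ 2 < 1) (θ : ℝ) :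
    HasDerivAt (fun y => eU1 y θ) (eU2 x θ) x := by
  have h1 : HasDerivAt (fun y : ℝ => y * Real.sin θ ^ 2) (Real.sin θ ^ 2) x := by
    simpa using (hasDerivAt_id x).mul_const (Real.sin θ ^ 2)
  have h2 := (hasDerivAt_eB x θ).rpow_const (p := -(3/2:ℝ)) (Or.inl (eB_ne hx θ))
  have he : (-(3/2:ℝ)) - 1 = -(5/2:ℝ) := by norm_num
  rw [he] at h2
  have h := h1.mul h2
  have : Real.sin θ ^ 2 * eB x θ ^ (-(3/2:ℝ)) +
      x * Real.sin θ ^ 2 * (-(2 * x * Real.sin θ ^ 2) * (-(3/2:ℝ)) * eB x θ ^ (-(5/2:ℝ)))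
      = eU2 x θ := by unfold eU2; ring
  rw [this] at h
  exact h

lemma ball_sq_lt {x y : ℝ} (hx0 : 0 < x) (hx1 : x < 1)
    (hy : y ∈ ball x ((1 - x) / 2)) : y ^ 2 < ((1 + x) / 2) ^ 2 := by
  rw [mem_ball, Real.dist_eq, abs_lt] at hy
  nlinarith [hy.1, hy.2]

lemma rpow_le_bound {y a θ : ℝ} (ha : a ^ 2 < 1) (hy : y ^ 2 ≤ a ^ 2) (p : ℝ)
    (hp : p ≤ 0) : eB y θ ^ p ≤ (1 - a ^ 2) ^ p := by
  have hy1 : y ^ 2 < 1 := lt_of_le_of_lt hy ha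
  have h1 : (0:ℝ) < 1 - a ^ 2 := by linarith
  have h2 : 1 - a ^ 2 ≤ eB y θ := by
    have := sin_sq_le_one θ
    have h3 : (0:ℝ) ≤ Real.sin θ ^ 2 := sq_nonneg _
    unfold eB; nlinarith [sq_nonneg y]
  exact Real.rpow_le_rpow_of_nonpos h1 h2 hp

/-- first derivative under the integral sign -/
lemma hasDerivAt_K {x : ℝ} (hx0 : 0 < x) (hx1 : x < 1) :
    HasDerivAt ellipticK (∫ θ in (0:ℝ)..(π/2), eU1 x θ) x := by
  set a : ℝ := (1 + x) / 2 with ha_def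
  have ha : a ^ 2 < 1 := by rw [ha_def]; nlinarith
  have hx : x ^ 2 < 1 := by nlinarith
  have hε : (0:ℝ) < (1 - x) / 2 := by linarith
  have key := intervalIntegral.hasDerivAt_integral_of_dominated_loc_of_deriv_le
    (F := fun y θ => eU y θ) (F' := fun y θ => eU1 y θ)
    (bound := fun _ => a * (1 - a ^ 2) ^ (-(3/2:ℝ)))
    (a := (0:ℝ)) (b := π/2) (μ := volume) (x₀ := x) (ball_mem_nhds x hε)
    (Filter.eventually_of_mem (ball_mem_nhds x hε) (fun y hy =>
      (continuous_eU (lt_trans (ball_sq_lt hx0 hx1 hy) ha)).aestronglyMeasurable))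
    ((continuous_eU hx).intervalIntegrable _ _)
    (continuous_eU1 hx).aestronglyMeasurable
    (ae_of_all _ (fun θ _ y hy => by
      have hy2 : y ^ 2 < a ^ 2 := ball_sq_lt hx0 hx1 hy
      have hy1 : y ^ 2 < 1 := lt_trans hy2 ha
      have hB := rpow_le_bound ha hy2.le (-(3/2:ℝ)) (by norm_num) (θ := θ)
      have hBpos : (0:ℝ) ≤ eB y θ ^ (-(3/2:ℝ)) :=
        (Real.rpow_pos_of_pos (eB_pos hy1 θ) _).le
      have hya : |y| ≤ a := by
        rw [abs_le]; constructor <;> nlinarith [abs_nonneg y, sq_abs y]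
      have hs : Real.sin θ ^ 2 ≤ 1 := sin_sq_le_one θ
      have hs0 : (0:ℝ) ≤ Real.sin θ ^ 2 := sq_nonneg _
      have h0a : (0:ℝ) ≤ a := by rw [ha_def]; linarith
      calc ‖eU1 y θ‖ = |y| * Real.sin θ ^ 2 * eB y θ ^ (-(3/2:ℝ)) := by
            rw [Real.norm_eq_abs]; unfold eU1
            rw [abs_mul, abs_mul, abs_of_nonneg hs0, abs_of_nonneg hBpos]
        _ ≤ a * 1 * (1 - a ^ 2) ^ (-(3/2:ℝ)) := by
            apply mul_le_mul _ hB hBpos (by positivity)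
            exact mul_le_mul hya hs hs0 h0a
        _ = a * (1 - a ^ 2) ^ (-(3/2:ℝ)) := by ring))
    (intervalIntegrable_const)
    (ae_of_all _ (fun θ _ y hy =>
      hasDerivAt_eU (lt_trans (ball_sq_lt hx0 hx1 hy) ha) θ))
  exact key.2

/-- second derivative under the integral sign -/
lemma hasDerivAt_K1 {x : ℝ} (hx0 : 0 < x) (hx1 : x < 1) :
    HasDerivAt (fun y => ∫ θ in (0:ℝ)..(π/2), eU1 y θ)
      (∫ θ in (0:ℝ)..(π/2), eU2 x θ) x := by
  set a : ℝ := (1 + x) / 2 with ha_def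
  have ha : a ^ 2 < 1 := by rw [ha_def]; nlinarith
  have hx : x ^ 2 < 1 := by nlinarith
  have hε : (0:ℝ) < (1 - x) / 2 := by linarith
  have key := intervalIntegral.hasDerivAt_integral_of_dominated_loc_of_deriv_le
    (F := fun y θ => eU1 y θ) (F' := fun y θ => eU2 y θ)
    (bound := fun _ => (1 - a ^ 2) ^ (-(3/2:ℝ)) + 3 * (1 - a ^ 2) ^ (-(5/2:ℝ)))
    (a := (0:ℝ)) (b := π/2) (μ := volume) (x₀ := x) (ball_mem_nhds x hε)
    (Filter.eventually_of_mem (ball_mem_nhds x hε) (fun y hy =>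
      (continuous_eU1 (lt_trans (ball_sq_lt hx0 hx1 hy) ha)).aestronglyMeasurable))
    ((continuous_eU1 hx).intervalIntegrable _ _)
    (continuous_eU2 hx).aestronglyMeasurable
    (ae_of_all _ (fun θ _ y hy => by
      have hy2 : y ^ 2 < a ^ 2 := ball_sq_lt hx0 hx1 hy
      have hy1 : y ^ 2 < 1 := lt_trans hy2 ha
      have hB3 := rpow_le_bound ha hy2.le (-(3/2:ℝ)) (by norm_num) (θ := θ)
      have hB5 := rpow_le_bound ha hy2.le (-(5/2:ℝ)) (by norm_num) (θ := θ)
      have hp3 : (0:ℝ) ≤ eB y θ ^ (-(3/2:ℝ)) :=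
        (Real.rpow_pos_of_pos (eB_pos hy1 θ) _).le
      have hp5 : (0:ℝ) ≤ eB y θ ^ (-(5/2:ℝ)) :=
        (Real.rpow_pos_of_pos (eB_pos hy1 θ) _).le
      have hs : Real.sin θ ^ 2 ≤ 1 := sin_sq_le_one θ
      have hs0 : (0:ℝ) ≤ Real.sin θ ^ 2 := sq_nonneg _
      have hs4 : Real.sin θ ^ 4 ≤ 1 := by nlinarith
      have hs40 : (0:ℝ) ≤ Real.sin θ ^ 4 := by positivity
      have ha1 : a ≤ 1 := by nlinarith [abs_nonneg a, sq_nonneg (a-1)]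
      have hy21 : y ^ 2 ≤ 1 := hy1.le
      have h1 : Real.sin θ ^ 2 * eB y θ ^ (-(3/2:ℝ)) ≤ (1 - a ^ 2) ^ (-(3/2:ℝ)) := by
        calc Real.sin θ ^ 2 * eB y θ ^ (-(3/2:ℝ)) ≤ 1 * (1 - a ^ 2) ^ (-(3/2:ℝ)) :=
              mul_le_mul hs hB3 hp3 one_pos.le
          _ = _ := one_mul _
      have h2 : 3 * y ^ 2 * Real.sin θ ^ 4 * eB y θ ^ (-(5/2:ℝ))
          ≤ 3 * (1 - a ^ 2) ^ (-(5/2:ℝ)) := by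
        have hsy : y ^ 2 * Real.sin θ ^ 4 ≤ 1 :=
          le_trans (mul_le_mul hy21 hs4 hs40 one_pos.le) (by norm_num)
        have := mul_le_mul hsy hB5 hp5 one_pos.le
        nlinarith
      have habs : ‖eU2 y θ‖ = eU2 y θ := by
        rw [Real.norm_eq_abs, abs_of_nonneg]
        unfold eU2; positivity
      rw [habs]; unfold eU2; nlinarith))
    (intervalIntegrable_const)
    (ae_of_all _ (fun θ _ y hy =>
      hasDerivAt_eU1 (lt_trans (ball_sq_lt hx0 hx1 hy) ha) θ))
  exact key.2

lemma deriv_K {x : ℝ} (hx : x ∈ Set.Ioo (0:ℝ) 1) :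
    deriv ellipticK x = ∫ θ in (0:ℝ)..(π/2), eU1 x θ :=
  (hasDerivAt_K hx.1 hx.2).deriv

lemma derivK_eventually {x : ℝ} (hx : x ∈ Set.Ioo (0:ℝ) 1) :
    deriv ellipticK =ᶠ[nhds x] fun y => ∫ θ in (0:ℝ)..(π/2), eU1 y θ :=
  Filter.eventuallyEq_of_mem (isOpen_Ioo.mem_nhds hx) (fun y hy => deriv_K hy)

lemma deriv2_K {x : ℝ} (hx : x ∈ Set.Ioo (0:ℝ) 1) :
    deriv (deriv ellipticK) x = ∫ θ in (0:ℝ)..(π/2), eU2 x θ := by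
  rw [Filter.EventuallyEq.deriv_eq (derivK_eventually hx)]
  exact (hasDerivAt_K1 hx.1 hx.2).deriv

/-- the pointwise identity: the Chudnovsky combination is a θ-derivative -/
lemma hasDerivAt_g {x : ℝ} (hx : x ^ 2 < 1) (θ : ℝ) :
    HasDerivAt (fun φ => x * Real.sin φ * Real.cos φ * eB x φ ^ (-(3/2:ℝ)))
      (x * (x - 1) * (x + 1) * eU2 x θ + (3 * x ^ 2 - 1) * eU1 x θ + x * eU x θ) θ := by
  have hBpos := eB_pos hx θ
  have h1 : HasDerivAt (fun φ => x * Real.sin φ * Real.cos φ)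
      (x * (Real.cos θ ^ 2 - Real.sin θ ^ 2)) θ := by
    have := ((Real.hasDerivAt_sin θ).const_mul x).fun_mul (Real.hasDerivAt_cos θ)
    exact this.congr_deriv (by ring)
  have hBθ : HasDerivAt (fun φ => eB x φ)
      (-(x ^ 2 * (2 * Real.sin θ * Real.cos θ))) θ := by
    have := (((Real.hasDerivAt_sin θ).fun_pow 2).const_mul (x ^ 2)).const_sub 1
    unfold eB
    exact this.congr_deriv (by ring)
  have h2 := hBθ.rpow_const (p := -(3/2:ℝ)) (Or.inl hBpos.ne')
  have he : (-(3/2:ℝ)) - 1 = -(5/2:ℝ) := by norm_num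
  rw [he] at h2
  have h := h1.fun_mul h2
  refine h.congr_deriv ?_
  symm
  have hB3 : eB x θ ^ (-(3/2:ℝ)) = eB x θ ^ (-(5/2:ℝ)) * eB x θ := by
    rw [show (-(3/2:ℝ)) = (-(5/2:ℝ)) + 1 by norm_num, Real.rpow_add hBpos, Real.rpow_one]
  have hB1 : eB x θ ^ (-(1/2:ℝ)) = eB x θ ^ (-(5/2:ℝ)) * eB x θ ^ (2:ℕ) := by
    rw [show (-(1/2:ℝ)) = (-(5/2:ℝ)) + ((2:ℕ):ℝ) by norm_num, Real.rpow_add hBpos,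
      Real.rpow_natCast]
  have hc : Real.cos θ ^ 2 = 1 - Real.sin θ ^ 2 := Real.cos_sq' θ
  unfold eU2 eU1 eU
  rw [hB3, hB1]
  set D := eB x θ ^ (-(5/2:ℝ))
  have hBdef : eB x θ = 1 - x ^ 2 * Real.sin θ ^ 2 := rfl
  rw [hBdef]
  linear_combination (-(x * D) - 2 * x ^ 3 * Real.sin θ ^ 2 * D) * hc

lemma integral_combination {x : ℝ} (hx0 : 0 < x) (hx1 : x < 1) :
    (∫ θ in (0:ℝ)..(π/2),
      (x * (x - 1) * (x + 1) * eU2 x θ + (3 * x ^ 2 - 1) * eU1 x θ + x * eU x θ)) = 0 := by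
  have hx : x ^ 2 < 1 := by nlinarith
  have hcont : Continuous (fun θ => x * (x - 1) * (x + 1) * eU2 x θ
      + (3 * x ^ 2 - 1) * eU1 x θ + x * eU x θ) :=
    ((continuous_const.mul (continuous_eU2 hx)).add
      (continuous_const.mul (continuous_eU1 hx))).add
      (continuous_const.mul (continuous_eU hx))
  rw [intervalIntegral.integral_eq_sub_of_hasDerivAt
    (f := fun φ => x * Real.sin φ * Real.cos φ * eB x φ ^ (-(3/2:ℝ)))
    (fun θ _ => hasDerivAt_g hx θ) (hcont.intervalIntegrable _ _)]
  simp [Real.cos_pi_div_two]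

end ChudAux

open ChudAux MeasureTheory

theorem ellipticK_solves_first_chudnovsky :
    (∀ x ∈ Set.Ioo (0:ℝ) 1, DifferentiableAt ℝ ellipticK x) ∧
    (∀ x ∈ Set.Ioo (0:ℝ) 1, DifferentiableAt ℝ (deriv ellipticK) x) ∧
    ∀ x ∈ Set.Ioo (0:ℝ) 1,
      x * (x - 1) * (x + 1) * deriv (deriv ellipticK) x
        + (3 * x ^ 2 - 1) * deriv ellipticK x + x * ellipticK x = 0 := by
  refine ⟨fun x hx => (hasDerivAt_K hx.1 hx.2).differentiableAt, ?_, ?_⟩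
  · intro x hx
    rw [(derivK_eventually hx).differentiableAt_iff]
    exact (hasDerivAt_K1 hx.1 hx.2).differentiableAt
  · intro x hx
    have hxsq : x ^ 2 < 1 := by nlinarith [hx.1, hx.2]
    have hK : ellipticK x = ∫ θ in (0:ℝ)..(π/2), eU x θ := by
      simp only [ellipticK, eU, eB]
    rw [deriv2_K hx, deriv_K hx, hK]
    rw [← intervalIntegral.integral_const_mul, ← intervalIntegral.integral_const_mul,
      ← intervalIntegral.integral_const_mul,
      ← intervalIntegral.integral_add
        ((continuous_const.fun_mul (continuous_eU2 hxsq)).intervalIntegrable _ _)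
        ((continuous_const.fun_mul (continuous_eU1 hxsq)).intervalIntegrable _ _),
      ← intervalIntegral.integral_add
        (((continuous_const.fun_mul (continuous_eU2 hxsq)).fun_add
          (continuous_const.fun_mul (continuous_eU1 hxsq))).intervalIntegrable _ _)
        ((continuous_const.fun_mul (continuous_eU hxsq)).intervalIntegrable _ _)]
    exact integral_combination hx.1 hx.2
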